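/- Let f : A → B be a differential homomorphism of Keigher rings. Then the following are equivalent: (1) f has the going-up property for prime differential ideals; (2) the map f*_Δ : Spec^Δ B → Spec^Δ A is a closed map; (3) for every prime differential ideal 𝔮 of B, the induced map Spec^Δ(B/𝔮) → Spec^Δ(A/f⁻¹(𝔮)) is surjective. -/

import Mathlib

/-!
Common differential-algebra preamble.

A differential ring is a commutative ring `R` equipped with a family of derivations
`δ : ι → Derivation ℤ R R`.  Induced derivations on quotients by differential ideals
and on localizations are unique (the canonical map is an epimorphism), which justifies
quantifying universally over derivation families commuting with the canonical map.
-/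

universe u v

section Preamble

variable {ι : Type*}

/-- An ideal is a *differential ideal* with respect to a family of derivations. -/
def IsDiffIdeal {R : Type*} [CommRing R] (δ : ι → Derivation ℤ R R) (I : Ideal R) : Prop :=
  ∀ i : ι, ∀ x ∈ I, δ i x ∈ I

/-- A *Keigher ring*: the radical of any differential ideal is again differential. -/
def IsKeigher {R : Type*} [CommRing R] (δ : ι → Derivation ℤ R R) : Prop :=
  ∀ I : Ideal R, IsDiffIdeal δ I → IsDiffIdeal δ I.radical

/-- A ring homomorphism is a *differential homomorphism* if it commutes with the
derivations. -/
def IsDiffHom {A B : Type*} [CommRing A] [CommRing B]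
    (δA : ι → Derivation ℤ A A) (δB : ι → Derivation ℤ B B) (f : A →+* B) : Prop :=
  ∀ (i : ι) (a : A), f (δA i a) = δB i (f a)

theorem IsDiffHom.comp {A B C : Type*} [CommRing A] [CommRing B] [CommRing C]
    {δA : ι → Derivation ℤ A A} {δB : ι → Derivation ℤ B B} {δC : ι → Derivation ℤ C C}
    {f : A →+* B} {g : B →+* C} (hf : IsDiffHom δA δB f) (hg : IsDiffHom δB δC g) :
    IsDiffHom δA δC (g.comp f) := fun i a => by
  simp only [RingHom.comp_apply, hf i a, hg i (f a)]

/-- Iterated application of the derivations along a list of indices. -/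
def derivApply {B : Type*} [CommRing B] (δ : ι → Derivation ℤ B B) : List ι → B → B
  | [], b => b
  | i :: l, b => δ i (derivApply δ l b)

/-- `B` is *differentially finitely generated* over `A`: finitely many elements whose
iterated derivatives generate `B` as an `A`-algebra. -/
def IsDiffFG (A : Type*) {B : Type*} [CommRing A] [CommRing B] [Algebra A B]
    (δ : ι → Derivation ℤ B B) : Prop :=
  ∃ s : Finset B,
    Algebra.adjoin A {x : B | ∃ b ∈ s, ∃ l : List ι, derivApply δ l b = x} = ⊤

/-- A differential ring is *differentially simple* if it is nonzero and its only
differential ideals are `⊥` and `⊤`. -/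
def IsDiffSimple {R : Type*} [CommRing R] (δ : ι → Derivation ℤ R R) : Prop :=
  Nontrivial R ∧ ∀ I : Ideal R, IsDiffIdeal δ I → I = ⊥ ∨ I = ⊤

/-- The differential spectrum `Spec^Δ`, as a subspace of the prime spectrum. -/
def DiffSpec {R : Type*} [CommRing R] (δ : ι → Derivation ℤ R R) : Type _ :=
  {p : PrimeSpectrum R // IsDiffIdeal δ p.asIdeal}

instance {R : Type*} [CommRing R] (δ : ι → Derivation ℤ R R) :
    TopologicalSpace (DiffSpec δ) :=
  inferInstanceAs (TopologicalSpace {p : PrimeSpectrum R // IsDiffIdeal δ p.asIdeal})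

/-- The contraction map `f*_Δ : Spec^Δ B → Spec^Δ A` induced by a differential
homomorphism. -/
def diffComap {A B : Type*} [CommRing A] [CommRing B]
    {δA : ι → Derivation ℤ A A} {δB : ι → Derivation ℤ B B} {f : A →+* B}
    (hf : IsDiffHom δA δB f) (q : DiffSpec δB) : DiffSpec δA :=
  ⟨PrimeSpectrum.comap f q.1, fun i x hx => by
    have h : f x ∈ q.1.asIdeal := hx
    have hd := q.2 i (f x) h
    show f (δA i x) ∈ q.1.asIdeal
    rw [hf i x]
    exact hd⟩

/-- Going-up property for prime ideals. -/
def HasGoingUp {A B : Type*} [CommRing A] [CommRing B] (f : A →+* B) : Prop :=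
  ∀ p p' : Ideal A, p.IsPrime → p'.IsPrime → p ≤ p' →
    ∀ q : Ideal B, q.IsPrime → q.comap f = p →
      ∃ q' : Ideal B, q'.IsPrime ∧ q ≤ q' ∧ q'.comap f = p'

/-- Going-down property for prime ideals. -/
def HasGoingDown {A B : Type*} [CommRing A] [CommRing B] (f : A →+* B) : Prop :=
  ∀ p p' : Ideal A, p.IsPrime → p'.IsPrime → p' ≤ p →
    ∀ q : Ideal B, q.IsPrime → q.comap f = p →
      ∃ q' : Ideal B, q'.IsPrime ∧ q' ≤ q ∧ q'.comap f = p'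

/-- Going-up property for prime differential ideals. -/
def HasGoingUpDiff {A B : Type*} [CommRing A] [CommRing B]
    (δA : ι → Derivation ℤ A A) (δB : ι → Derivation ℤ B B) (f : A →+* B) : Prop :=
  ∀ p p' : Ideal A, p.IsPrime → IsDiffIdeal δA p → p'.IsPrime → IsDiffIdeal δA p' → p ≤ p' →
    ∀ q : Ideal B, q.IsPrime → IsDiffIdeal δB q → q.comap f = p →
      ∃ q' : Ideal B, q'.IsPrime ∧ IsDiffIdeal δB q' ∧ q ≤ q' ∧ q'.comap f = p'

/-- Going-down property for prime differential ideals. -/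
def HasGoingDownDiff {A B : Type*} [CommRing A] [CommRing B]
    (δA : ι → Derivation ℤ A A) (δB : ι → Derivation ℤ B B) (f : A →+* B) : Prop :=
  ∀ p p' : Ideal A, p.IsPrime → IsDiffIdeal δA p → p'.IsPrime → IsDiffIdeal δA p' → p' ≤ p →
    ∀ q : Ideal B, q.IsPrime → IsDiffIdeal δB q → q.comap f = p →
      ∃ q' : Ideal B, q'.IsPrime ∧ IsDiffIdeal δB q' ∧ q' ≤ q ∧ q'.comap f = p'

/-- Constructible subsets of a topological space: finite unions of sets of the form
(open ∩ closed). -/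
def IsConstructibleSet {X : Type*} [TopologicalSpace X] (E : Set X) : Prop :=
  ∃ S : Finset (Set X × Set X), (∀ p ∈ S, IsOpen p.1 ∧ IsClosed p.2) ∧
    E = ⋃ p ∈ S, p.1 ∩ p.2

/-- Membership in `SMax^Δ R`: `p` is a prime differential ideal such that the
localization `(R/p)_s` is differentially simple for some `s ∉ p`.  The quotient and
localization are taken with their (unique) induced derivations, hence the universal
quantification over derivation families commuting with the canonical maps. -/
def InSMax {R : Type u} [CommRing R] (δ : ι → Derivation ℤ R R) (p : Ideal R) : Prop :=
  p.IsPrime ∧ IsDiffIdeal δ p ∧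
  ∃ s : R, s ∉ p ∧
    ∀ δq : ι → Derivation ℤ (R ⧸ p) (R ⧸ p),
      IsDiffHom δ δq (Ideal.Quotient.mk p) →
      ∀ (L : Type u) [CommRing L] [Algebra (R ⧸ p) L],
        IsLocalization.Away (Ideal.Quotient.mk p s) L →
        ∀ δl : ι → Derivation ℤ L L,
          IsDiffHom δq δl (algebraMap (R ⧸ p) L) → IsDiffSimple δl

end Preamble


section AuxMachinery

variable {ι : Type*}

/-- Contraction of a differential ideal along a differential homomorphism is differential. -/
theorem aux_comap_diff {A B : Type*} [CommRing A] [CommRing B]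
    {δA : ι → Derivation ℤ A A} {δB : ι → Derivation ℤ B B} {f : A →+* B}
    (hf : IsDiffHom δA δB f) {q : Ideal B} (hq : IsDiffIdeal δB q) :
    IsDiffIdeal δA (q.comap f) := by
  intro i x hx
  show f (δA i x) ∈ q
  rw [hf i x]
  exact hq i _ hx

/-- The underlying function of the derivation induced on a quotient. -/
noncomputable def quotDerivFun {R : Type*} [CommRing R] (d : Derivation ℤ R R) (I : Ideal R) :
    R ⧸ I → R ⧸ I :=
  fun x => Ideal.Quotient.mk I (d (Function.surjInv Ideal.Quotient.mk_surjective x))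

theorem quotDerivFun_mk {R : Type*} [CommRing R] (d : Derivation ℤ R R) (I : Ideal R)
    (h : ∀ x ∈ I, d x ∈ I) (a : R) :
    quotDerivFun d I (Ideal.Quotient.mk I a) = Ideal.Quotient.mk I (d a) := by
  have hba : Ideal.Quotient.mk I
      (Function.surjInv Ideal.Quotient.mk_surjective (Ideal.Quotient.mk I a)) =
      Ideal.Quotient.mk I a :=
    Function.surjInv_eq Ideal.Quotient.mk_surjective _
  rw [Ideal.Quotient.eq] at hba
  have hd := h _ hba
  rw [Derivation.map_sub] at hd
  show Ideal.Quotient.mk I _ = Ideal.Quotient.mk I (d a)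
  rwa [Ideal.Quotient.eq]

/-- The derivation induced on the quotient by a differential ideal. -/
noncomputable def quotDeriv {R : Type*} [CommRing R] (d : Derivation ℤ R R) (I : Ideal R)
    (h : ∀ x ∈ I, d x ∈ I) : Derivation ℤ (R ⧸ I) (R ⧸ I) where
  toLinearMap :=
    { toFun := quotDerivFun d I
      map_add' := fun x y => by
        obtain ⟨a, rfl⟩ := Ideal.Quotient.mk_surjective x
        obtain ⟨b, rfl⟩ := Ideal.Quotient.mk_surjective y
        rw [← map_add, quotDerivFun_mk d I h, quotDerivFun_mk d I h, quotDerivFun_mk d I h,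
          Derivation.map_add, map_add]
      map_smul' := fun r x => by
        obtain ⟨a, rfl⟩ := Ideal.Quotient.mk_surjective x
        show quotDerivFun d I _ = r • quotDerivFun d I _
        rw [← map_zsmul (Ideal.Quotient.mk I) r a, quotDerivFun_mk d I h,
          quotDerivFun_mk d I h, d.map_smul, map_zsmul] }
  map_one_eq_zero' := by
    show quotDerivFun d I 1 = 0
    rw [← map_one (Ideal.Quotient.mk I), quotDerivFun_mk d I h, Derivation.map_one_eq_zero,
      map_zero]
  leibniz' := fun x y => by
    obtain ⟨a, rfl⟩ := Ideal.Quotient.mk_surjective x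
    obtain ⟨b, rfl⟩ := Ideal.Quotient.mk_surjective y
    show quotDerivFun d I _ = _ • quotDerivFun d I _ + _ • quotDerivFun d I _
    rw [← map_mul, quotDerivFun_mk d I h, quotDerivFun_mk d I h, quotDerivFun_mk d I h,
      Derivation.leibniz, smul_eq_mul, smul_eq_mul, smul_eq_mul, smul_eq_mul, map_add,
      map_mul, map_mul]

theorem quotDeriv_mk {R : Type*} [CommRing R] (d : Derivation ℤ R R) (I : Ideal R)
    (h : ∀ x ∈ I, d x ∈ I) (a : R) :
    quotDeriv d I h (Ideal.Quotient.mk I a) = Ideal.Quotient.mk I (d a) :=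
  quotDerivFun_mk d I h a

section Keigher

variable {R : Type*} [CommRing R] (δ : ι → Derivation ℤ R R)

/-- The differential ideal generated by a set. -/
def dspan (S : Set R) : Ideal R := sInf {J : Ideal R | IsDiffIdeal δ J ∧ S ⊆ ↑J}

theorem subset_dspan (S : Set R) : S ⊆ ↑(dspan δ S) := fun _x hx =>
  Submodule.mem_sInf.2 fun _J hJ => hJ.2 hx

theorem dspan_diff (S : Set R) : IsDiffIdeal δ (dspan δ S) := fun i x hx =>
  Submodule.mem_sInf.2 fun J hJ => hJ.1 i x (Submodule.mem_sInf.1 hx J hJ)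

theorem dspan_le {S : Set R} {J : Ideal R} (hJ : IsDiffIdeal δ J) (hS : S ⊆ ↑J) :
    dspan δ S ≤ J := sInf_le ⟨hJ, hS⟩

/-- The radical differential ideal generated by a set. -/
def rds (S : Set R) : Ideal R := (dspan δ S).radical

theorem subset_rds (S : Set R) : S ⊆ ↑(rds δ S) := fun x hx =>
  Ideal.le_radical (subset_dspan δ S hx)

theorem rds_diff (hK : IsKeigher δ) (S : Set R) : IsDiffIdeal δ (rds δ S) :=
  hK _ (dspan_diff δ S)

theorem rds_le {S : Set R} {J : Ideal R} (hJ : IsDiffIdeal δ J) (hrad : J.radical ≤ J)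
    (hS : S ⊆ ↑J) : rds δ S ≤ J :=
  le_trans (Ideal.radical_mono (dspan_le δ hJ hS)) hrad

/-- The colon-type ideal `{x | s * x ∈ K}`. -/
def dcolon (K : Ideal R) (s : R) : Ideal R where
  carrier := {x | s * x ∈ K}
  zero_mem' := by simp
  add_mem' := fun {a b} ha hb => by
    show s * (a + b) ∈ K
    rw [mul_add]
    exact K.add_mem ha hb
  smul_mem' := fun c x hx => by
    show s * (c • x) ∈ K
    rw [smul_eq_mul, show s * (c * x) = c * (s * x) by ring]
    exact K.mul_mem_left c hx

theorem mem_dcolon {K : Ideal R} {s x : R} : x ∈ dcolon K s ↔ s * x ∈ K := Iff.rfl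

theorem dcolon_diff {K : Ideal R} (hrad : K.radical ≤ K) (hdiff : IsDiffIdeal δ K) (s : R) :
    IsDiffIdeal δ (dcolon K s) := by
  intro i x hx
  have h1 : s * x ∈ K := hx
  have h2 : δ i (s * x) ∈ K := hdiff i _ h1
  have hl : δ i (s * x) = s * δ i x + x * δ i s := by
    rw [Derivation.leibniz, smul_eq_mul, smul_eq_mul]
  have hsq : (s * δ i x) ^ 2 ∈ K := by
    have heq : (s * δ i x) ^ 2 =
        (s * δ i x) * (δ i (s * x)) - (s * x) * (δ i s * δ i x) := by
      rw [hl]; ring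
    rw [heq]
    exact K.sub_mem (K.mul_mem_left _ h2) (K.mul_mem_right _ h1)
  exact hrad ⟨2, hsq⟩

theorem dcolon_rad {K : Ideal R} (hrad : K.radical ≤ K) (s : R) :
    (dcolon K s).radical ≤ dcolon K s := by
  intro z hz
  obtain ⟨n, hn⟩ := hz
  have hn' : s * z ^ n ∈ K := hn
  have hpow : (s * z) ^ (n + 1) ∈ K := by
    have heq : (s * z) ^ (n + 1) = (s * z ^ n) * (s ^ n * z) := by ring
    rw [heq]
    exact K.mul_mem_right _ hn'
  exact hrad ⟨n + 1, hpow⟩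

/-- In a Keigher ring, a differential ideal maximal among those disjoint from a
multiplicative monoid is prime. -/
theorem keigher_maximal_prime (hK : IsKeigher δ) (T : Submonoid R) (M : Ideal R)
    (hMd : IsDiffIdeal δ M) (hdisj : ∀ t ∈ T, t ∉ M)
    (hmax : ∀ J : Ideal R, IsDiffIdeal δ J → (∀ t ∈ T, t ∉ J) → M ≤ J → J = M) :
    M.IsPrime := by
  have h1 : (1 : R) ∉ M := hdisj 1 T.one_mem
  have hMrad : M.radical = M := by
    apply hmax M.radical (hK M hMd) ?_ Ideal.le_radical
    intro t ht hmem
    obtain ⟨n, hn⟩ := hmem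
    exact hdisj _ (pow_mem ht n) hn
  constructor
  · intro htop
    exact h1 (htop ▸ Submodule.mem_top)
  intro a b hab
  by_contra hcon
  push_neg at hcon
  obtain ⟨ha, hb⟩ := hcon
  have hmeet : ∀ c : R, c ∉ M → ∃ t ∈ T, t ∈ rds δ (↑M ∪ {c}) := by
    intro c hc
    by_contra h'
    push_neg at h'
    have heq := hmax (rds δ (↑M ∪ {c})) (rds_diff δ hK _)
      (fun t ht hm => h' t ht hm) (fun x hx => subset_rds δ _ (Or.inl hx))
    exact hc (heq ▸ subset_rds δ (↑M ∪ {c}) (Or.inr rfl))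
  obtain ⟨t₁, ht₁T, ht₁⟩ := hmeet a ha
  obtain ⟨t₂, ht₂T, ht₂⟩ := hmeet b hb
  have stepA : ∀ s ∈ (↑M ∪ {a} : Set R), rds δ (↑M ∪ {b}) ≤ dcolon M s := by
    intro s hs
    apply rds_le δ (dcolon_diff δ hMrad.le hMd s) (dcolon_rad hMrad.le s)
    intro z hz
    rcases hz with hz | hz
    · exact M.mul_mem_left s hz
    · rcases hs with hs | hs
      · exact M.mul_mem_right z hs
      · rw [Set.mem_singleton_iff] at hs hz
        rw [hs, hz]
        exact hab
  have key : ∀ y ∈ rds δ (↑M ∪ {b}), ∀ x ∈ rds δ (↑M ∪ {a}), x * y ∈ M := by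
    intro y hy
    have hle : rds δ (↑M ∪ {a}) ≤ dcolon M y := by
      apply rds_le δ (dcolon_diff δ hMrad.le hMd y) (dcolon_rad hMrad.le y)
      intro s hs
      show y * s ∈ M
      rw [mul_comm]
      exact stepA s hs hy
    intro x hx
    have := hle hx
    rw [mem_dcolon] at this
    rwa [mul_comm]
  exact hdisj (t₁ * t₂) (T.mul_mem ht₁T ht₂T) (key t₂ ht₂ t₁ ht₁)

/-- Zorn: a differential ideal disjoint from a multiplicative monoid is contained in a
maximal such. -/
theorem exists_max_diff (T : Submonoid R) (I0 : Ideal R) (h0 : IsDiffIdeal δ I0)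
    (hd : ∀ t ∈ T, t ∉ I0) :
    ∃ M : Ideal R, I0 ≤ M ∧ IsDiffIdeal δ M ∧ (∀ t ∈ T, t ∉ M) ∧
      ∀ J : Ideal R, IsDiffIdeal δ J → (∀ t ∈ T, t ∉ J) → M ≤ J → J = M := by
  have hub : ∀ c ⊆ {J : Ideal R | IsDiffIdeal δ J ∧ ∀ t ∈ T, t ∉ J},
      IsChain (· ≤ ·) c → ∀ y ∈ c,
      ∃ ub ∈ {J : Ideal R | IsDiffIdeal δ J ∧ ∀ t ∈ T, t ∉ J}, ∀ z ∈ c, z ≤ ub := by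
    intro c hcs hchain y hy
    refine ⟨sSup c, ⟨?_, ?_⟩, fun z hz => le_sSup hz⟩
    · intro i x hx
      obtain ⟨J, hJc, hxJ⟩ :=
        (Submodule.mem_sSup_of_directed ⟨y, hy⟩ hchain.directedOn).1 hx
      exact le_sSup hJc ((hcs hJc).1 i x hxJ)
    · intro t ht hmem
      obtain ⟨J, hJc, htJ⟩ :=
        (Submodule.mem_sSup_of_directed ⟨y, hy⟩ hchain.directedOn).1 hmem
      exact (hcs hJc).2 t ht htJ
  obtain ⟨M, hM0, hMmax⟩ := zorn_le_nonempty₀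
    {J : Ideal R | IsDiffIdeal δ J ∧ ∀ t ∈ T, t ∉ J} hub I0 ⟨h0, hd⟩
  exact ⟨M, hM0, hMmax.1.1, hMmax.1.2,
    fun J hJd hJt hMJ => le_antisymm (hMmax.2 ⟨hJd, hJt⟩ hMJ) hMJ⟩

end Keigher

end AuxMachinery

/-- For a differential homomorphism `f : A → B` of Keigher rings the
following are equivalent: (1) `f` has the going-up property for prime differential
ideals; (2) `f*_Δ : Spec^Δ B → Spec^Δ A` is a closed map; (3) for every prime
differential ideal `q` of `B` the induced map `Spec^Δ (B/q) → Spec^Δ (A/q^c)` is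
surjective (the quotients carry their unique induced derivations). -/
theorem stmt12 {ι A B : Type*} [CommRing A] [CommRing B]
    (δA : ι → Derivation ℤ A A) (δB : ι → Derivation ℤ B B)
    (hKA : IsKeigher δA) (hKB : IsKeigher δB)
    (f : A →+* B) (hf : IsDiffHom δA δB f) :
    List.TFAE [
      HasGoingUpDiff δA δB f,
      IsClosedMap (diffComap hf),
      ∀ q : Ideal B, q.IsPrime → IsDiffIdeal δB q →
        ∀ δAq : ι → Derivation ℤ (A ⧸ q.comap f) (A ⧸ q.comap f),
          IsDiffHom δA δAq (Ideal.Quotient.mk (q.comap f)) →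
        ∀ δBq : ι → Derivation ℤ (B ⧸ q) (B ⧸ q),
          IsDiffHom δB δBq (Ideal.Quotient.mk q) →
        ∀ P : Ideal (A ⧸ q.comap f), P.IsPrime → IsDiffIdeal δAq P →
          ∃ Q : Ideal (B ⧸ q), Q.IsPrime ∧ IsDiffIdeal δBq Q ∧
            Q.comap (Ideal.quotientMap q f le_rfl) = P] := by
  tfae_have 1 → 3 := by
    intro h1 q hq hqd δAq hAq δBq hBq P hP hPd
    have hpd : IsDiffIdeal δA (q.comap f) := aux_comap_diff hf hqd
    have hp'P : (P.comap (Ideal.Quotient.mk (q.comap f))).IsPrime := by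
      haveI := hP
      exact Ideal.IsPrime.comap _
    have hp'd : IsDiffIdeal δA (P.comap (Ideal.Quotient.mk (q.comap f))) := by
      intro i x hx
      show Ideal.Quotient.mk (q.comap f) (δA i x) ∈ P
      rw [hAq i x]
      exact hPd i _ hx
    have hpp' : q.comap f ≤ P.comap (Ideal.Quotient.mk (q.comap f)) := by
      intro x hx
      show Ideal.Quotient.mk (q.comap f) x ∈ P
      rw [Ideal.Quotient.eq_zero_iff_mem.mpr hx]
      exact P.zero_mem
    obtain ⟨q', hq'p, hq'd, hqq', hq'c⟩ :=
      h1 (q.comap f) (P.comap (Ideal.Quotient.mk (q.comap f)))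
        (Ideal.IsPrime.comap f (hK := hq)) hpd hp'P hp'd hpp' q hq hqd rfl
    haveI := hq'p
    refine ⟨q'.map (Ideal.Quotient.mk q), ?_, ?_, ?_⟩
    · exact Ideal.map_isPrime_of_surjective Ideal.Quotient.mk_surjective
        (by rw [Ideal.mk_ker]; exact hqq')
    · intro i y hy
      obtain ⟨x, hxq', rfl⟩ :=
        (Ideal.mem_map_iff_of_surjective _ Ideal.Quotient.mk_surjective).1 hy
      rw [← hBq i x]
      exact Ideal.mem_map_of_mem _ (hq'd i x hxq')
    · ext z
      obtain ⟨a, rfl⟩ := Ideal.Quotient.mk_surjective z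
      rw [Ideal.mem_comap, Ideal.quotientMap_mk, Ideal.mem_quotient_iff_mem hqq',
        ← Ideal.mem_comap, hq'c, Ideal.mem_comap]
  tfae_have 3 → 1 := by
    intro h3 p p' hp hpd hp' hp'd hle q hqp hqd hcom
    subst hcom
    set δAq : ι → Derivation ℤ (A ⧸ q.comap f) (A ⧸ q.comap f) :=
      fun i => quotDeriv (δA i) (q.comap f) (fun x hx => aux_comap_diff hf hqd i x hx)
      with hδAq
    set δBq : ι → Derivation ℤ (B ⧸ q) (B ⧸ q) :=
      fun i => quotDeriv (δB i) q (fun x hx => hqd i x hx) with hδBq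
    have hAq : IsDiffHom δA δAq (Ideal.Quotient.mk (q.comap f)) := fun i a =>
      (quotDeriv_mk (δA i) _ _ a).symm
    have hBq : IsDiffHom δB δBq (Ideal.Quotient.mk q) := fun i a =>
      (quotDeriv_mk (δB i) _ _ a).symm
    haveI := hp'
    have hPprime : (p'.map (Ideal.Quotient.mk (q.comap f))).IsPrime :=
      Ideal.map_isPrime_of_surjective Ideal.Quotient.mk_surjective
        (by rw [Ideal.mk_ker]; exact hle)
    have hPd : IsDiffIdeal δAq (p'.map (Ideal.Quotient.mk (q.comap f))) := by
      intro i y hy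
      obtain ⟨x, hx, rfl⟩ :=
        (Ideal.mem_map_iff_of_surjective _ Ideal.Quotient.mk_surjective).1 hy
      rw [← hAq i x]
      exact Ideal.mem_map_of_mem _ (hp'd i x hx)
    obtain ⟨Q, hQp, hQd, hQc⟩ := h3 q hqp hqd δAq hAq δBq hBq _ hPprime hPd
    haveI := hQp
    refine ⟨Q.comap (Ideal.Quotient.mk q), Ideal.IsPrime.comap _, ?_, ?_, ?_⟩
    · intro i x hx
      show Ideal.Quotient.mk q (δB i x) ∈ Q
      rw [hBq i x]
      exact hQd i _ hx
    · intro x hx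
      show Ideal.Quotient.mk q x ∈ Q
      rw [Ideal.Quotient.eq_zero_iff_mem.mpr hx]
      exact Q.zero_mem
    · ext a
      have hqm : Ideal.quotientMap q f le_rfl (Ideal.Quotient.mk (q.comap f) a) =
          Ideal.Quotient.mk q (f a) := Ideal.quotientMap_mk
      rw [Ideal.mem_comap, Ideal.mem_comap, ← hqm, ← Ideal.mem_comap, hQc,
        Ideal.mem_quotient_iff_mem hle]
  tfae_have 1 → 2 := by
    intro h1 C hC
    replace hC := isClosed_induced_iff.1 hC
    obtain ⟨Z, hZ, rfl⟩ := hC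
    obtain ⟨I, rfl⟩ := (PrimeSpectrum.isClosed_iff_zeroLocus_ideal Z).1 hZ
    refine isClosed_induced_iff.2 ?_
    refine ⟨PrimeSpectrum.zeroLocus
      (↑(sInf ((fun q : DiffSpec δB => q.1.asIdeal.comap f) ''
        (Subtype.val ⁻¹' PrimeSpectrum.zeroLocus (↑I : Set B)))) : Set A),
      PrimeSpectrum.isClosed_zeroLocus _, ?_⟩
    ext ⟨p, hpdiff⟩
    haveI := p.2
    constructor
    · intro hJp
      have hJp' : sInf ((fun q : DiffSpec δB => q.1.asIdeal.comap f) ''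
          (Subtype.val ⁻¹' PrimeSpectrum.zeroLocus (↑I : Set B))) ≤ p.asIdeal := hJp
      -- the multiplicative set
      have hdisj : ∀ t ∈ Submonoid.map (f : A →* B) p.asIdeal.primeCompl,
          t ∉ rds δB (↑I : Set B) := by
        rintro _ ⟨a, ha, rfl⟩ hfa
        apply ha
        apply hJp'
        apply Submodule.mem_sInf.2
        rintro _ ⟨qq, hqq, rfl⟩
        show f a ∈ qq.1.asIdeal
        haveI := qq.1.2
        have hIq : (↑I : Set B) ⊆ ↑qq.1.asIdeal := hqq
        exact rds_le δB qq.2 qq.1.2.isRadical hIq hfa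
      obtain ⟨M, hKM, hMd, hMt, hMmax⟩ := exists_max_diff δB
        (Submonoid.map (f : A →* B) p.asIdeal.primeCompl) (rds δB (↑I : Set B))
        (rds_diff δB hKB _) hdisj
      have hMp : M.IsPrime := keigher_maximal_prime δB hKB _ M hMd hMt hMmax
      haveI := hMp
      have hcle : M.comap f ≤ p.asIdeal := by
        intro a haM
        by_contra han
        exact hMt (f a) ⟨a, han, rfl⟩ haM
      obtain ⟨q', hq'p, hq'd, hMq', hq'c⟩ :=
        h1 (M.comap f) p.asIdeal (Ideal.IsPrime.comap f) (aux_comap_diff hf hMd)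
          p.2 hpdiff hcle M hMp hMd rfl
      refine ⟨⟨⟨q', hq'p⟩, hq'd⟩, ?_, ?_⟩
      · show (↑I : Set B) ⊆ ↑q'
        intro x hx
        exact hMq' (hKM (subset_rds δB _ hx))
      · apply Subtype.ext
        apply PrimeSpectrum.ext
        exact hq'c
    · rintro ⟨qq, hqq, heq⟩
      rw [← heq]
      show (↑(sInf ((fun q : DiffSpec δB => q.1.asIdeal.comap f) ''
        (Subtype.val ⁻¹' PrimeSpectrum.zeroLocus (↑I : Set B)))) : Set A) ⊆
        ↑(diffComap hf qq).1.asIdeal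
      intro a ha
      have := Submodule.mem_sInf.1 ha (qq.1.asIdeal.comap f) ⟨qq, hqq, rfl⟩
      exact this
  tfae_have 2 → 1 := by
    intro h2 p p' hpp hpd hp'p hp'd hle q hqp hqd hqc
    have hCclosed : IsClosed
        (Subtype.val ⁻¹' PrimeSpectrum.zeroLocus (↑q : Set B) : Set (DiffSpec δB)) :=
      (PrimeSpectrum.isClosed_zeroLocus _).preimage continuous_subtype_val
    have himg := h2 _ hCclosed
    replace himg := isClosed_induced_iff.1 himg
    obtain ⟨Z, hZ, hZeq⟩ := himg
    obtain ⟨E, rfl⟩ := (PrimeSpectrum.isClosed_iff_zeroLocus Z).1 hZ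
    have hqmem : (⟨⟨q, hqp⟩, hqd⟩ : DiffSpec δB) ∈
        Subtype.val ⁻¹' PrimeSpectrum.zeroLocus (↑q : Set B) := by
      show (↑q : Set B) ⊆ ↑q
      exact subset_rfl
    have hpmem : (⟨⟨p, hpp⟩, hpd⟩ : DiffSpec δA) ∈
        diffComap hf '' (Subtype.val ⁻¹' PrimeSpectrum.zeroLocus (↑q : Set B)) := by
      refine ⟨_, hqmem, ?_⟩
      apply Subtype.ext
      apply PrimeSpectrum.ext
      exact hqc
    rw [← hZeq] at hpmem
    have hEp : E ⊆ ↑p := hpmem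
    have hp'mem : (⟨⟨p', hp'p⟩, hp'd⟩ : DiffSpec δA) ∈
        (Subtype.val ⁻¹' PrimeSpectrum.zeroLocus E : Set (DiffSpec δA)) := by
      show E ⊆ ↑p'
      exact fun x hx => hle (hEp hx)
    rw [hZeq] at hp'mem
    obtain ⟨q'', hq''C, hq''eq⟩ := hp'mem
    refine ⟨q''.1.asIdeal, q''.1.2, q''.2, ?_, ?_⟩
    · exact hq''C
    · have := congrArg (fun x : DiffSpec δA => x.1.asIdeal) hq''eq
      exact this
  tfae_finish
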